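/- Let φ = c₁ ∧ … ∧ c_M be a 3CNF formula over variables x₁, …, x_N, where each clause c_j = l_{j,1} ∨ l_{j,2} ∨ l_{j,3} consists of three literals (each literal being a variable x_i taken positively, written x_i⁺, or negatively, written x_i⁻), no clause appears twice in φ, and no variable appears twice in the same clause. Let D = {x̄_i, y_i, z_i : i ∈ {1,…,N}} ∪ {c̄_j : j ∈ {1,…,M}} be a set of d = 3N + M coordinates, and for u ∈ D let e(u) ∈ {0,1}^D be the corresponding standard basis vector. Define f(x_i⁻) = e(y_i) and f(x_i⁺) = e(y_i) + e(z_i). Define P_var = {e(x̄_i) + f(x_i⁻), e(x̄_i) + f(x_i⁺) : i ∈ {1,…,N}}, P_cla = {e(c̄_j) + f(l_{j,k}) : j ∈ {1,…,M}, k ∈ {1,2,3}}, p(x_i) = ½e(x̄_i) + e(y_i) + ½e(z_i) for each i, p(c_j) = ⅔e(c̄_j) + ⅓f(l_{j,1}) + ⅓f(l_{j,2}) + ⅓f(l_{j,3}) for each j, and P = P_var ∪ P_cla ∪ {p(x₁),…,p(x_N), p(c₁),…,p(c_M)} ⊆ [0,1]^D. Then φ is satisfiable if and only if there exists a set Q ⊆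 [0,1]^D with |Q| ≤ 3N + 3M and P ⊆ conv(Q). -/

import Mathlib

open Matrix
noncomputable section

/-- The coordinate set `D`: `Sum.inl (0, i) = x̄_i`, `Sum.inl (1, i) = y_i`,
`Sum.inl (2, i) = z_i`, and `Sum.inr j = c̄_j`. -/
abbrev SatCoord (N Mn : ℕ) := (Fin 3 × Fin N) ⊕ Fin Mn

/-- The standard basis vector `e(u)` of the coordinate `u`. -/
def satE {N Mn : ℕ} (u : SatCoord N Mn) : SatCoord N Mn → ℝ :=
  Pi.single u 1

/-- `f(x_i⁻) = e(y_i)` and `f(x_i⁺) = e(y_i) + e(z_i)`.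
A literal is a pair `(i, b)` with `b = true` for the positive literal `x_i⁺`. -/
def litVec {N Mn : ℕ} (l : Fin N × Bool) : SatCoord N Mn → ℝ :=
  if l.2 then satE (Sum.inl (1, l.1)) + satE (Sum.inl (2, l.1))
  else satE (Sum.inl (1, l.1))

/-- The point set `P = P_var ∪ P_cla ∪ {p(x_i)} ∪ {p(c_j)}` of the reduction. -/
def satP (N Mn : ℕ) (lit : Fin Mn → Fin 3 → Fin N × Bool) : Set (SatCoord N Mn → ℝ) :=
  (⋃ i : Fin N,
    {satE (Sum.inl (0, i)) + litVec (i, false),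
     satE (Sum.inl (0, i)) + litVec (i, true)}) ∪
  (⋃ j : Fin Mn, ⋃ k : Fin 3,
    {satE (Sum.inr j) + litVec (lit j k)}) ∪
  (Set.range fun i : Fin N =>
    (1 / 2 : ℝ) • satE (Sum.inl (0, i)) + satE (Sum.inl (1, i)) +
      (1 / 2 : ℝ) • satE (Sum.inl (2, i))) ∪
  (Set.range fun j : Fin Mn =>
    (2 / 3 : ℝ) • satE (Sum.inr j) +
      (1 / 3 : ℝ) • (litVec (lit j 0) + litVec (lit j 1) + litVec (lit j 2)))

-- coordinate lemmas
section coords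
variable {N Mn : ℕ}

@[simp] lemma satE_apply (u v : SatCoord N Mn) : satE u v = if v = u then 1 else 0 :=
  Pi.single_apply u 1 v

lemma litVec_X (l : Fin N × Bool) (i : Fin N) :
    litVec (N := N) (Mn := Mn) l (Sum.inl (0, i)) = 0 := by
  rcases l with ⟨a, b⟩
  cases b <;> simp [litVec, Prod.ext_iff]

lemma litVec_Y (l : Fin N × Bool) (i : Fin N) :
    litVec (N := N) (Mn := Mn) l (Sum.inl (1, i)) = if l.1 = i then 1 else 0 := by
  rcases l with ⟨a, b⟩
  cases b <;> simp [litVec, Prod.ext_iff, eq_comm]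

lemma litVec_Z (l : Fin N × Bool) (i : Fin N) :
    litVec (N := N) (Mn := Mn) l (Sum.inl (2, i)) = if l.1 = i ∧ l.2 = true then 1 else 0 := by
  rcases l with ⟨a, b⟩
  cases b <;> simp [litVec, Prod.ext_iff, eq_comm]

lemma litVec_C (l : Fin N × Bool) (j : Fin Mn) :
    litVec (N := N) (Mn := Mn) l (Sum.inr j) = 0 := by
  rcases l with ⟨a, b⟩
  cases b <;> simp [litVec]

end coords

-- weight machinery
section weights
variable {ι : Type*}

lemma exists_weights {Q : Finset (ι → ℝ)} {p : ι → ℝ}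
    (h : p ∈ convexHull ℝ (Q : Set (ι → ℝ))) :
    ∃ w : (ι → ℝ) → ℝ, (∀ q ∈ Q, 0 ≤ w q) ∧ ∑ q ∈ Q, w q = 1 ∧
      ∀ u, ∑ q ∈ Q, w q * q u = p u := by
  obtain ⟨w, hw0, hw1, hws⟩ := Finset.mem_convexHull'.mp h
  exact ⟨w, hw0, hw1, fun u => by
    rw [← congrFun hws u, Finset.sum_apply]; simp⟩

lemma supp_coord_zero {Q : Finset (ι → ℝ)} {w : (ι → ℝ) → ℝ} {u : ι}
    (hw0 : ∀ q ∈ Q, 0 ≤ w q) (hcube : ∀ q ∈ Q, ∀ v, q v ∈ Set.Icc (0:ℝ) 1)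
    (hsum : ∑ q ∈ Q, w q * q u = 0) :
    ∀ q ∈ Q, w q ≠ 0 → q u = 0 := by
  have h0 := (Finset.sum_eq_zero_iff_of_nonneg (fun q hq =>
    mul_nonneg (hw0 q hq) (hcube q hq u).1)).mp hsum
  intro q hq hwq
  have := h0 q hq
  rcases mul_eq_zero.mp this with h | h
  · exact absurd h hwq
  · exact h

lemma supp_coord_one {Q : Finset (ι → ℝ)} {w : (ι → ℝ) → ℝ} {u : ι}
    (hw0 : ∀ q ∈ Q, 0 ≤ w q) (hw1 : ∑ q ∈ Q, w q = 1)
    (hcube : ∀ q ∈ Q, ∀ v, q v ∈ Set.Icc (0:ℝ) 1)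
    (hsum : ∑ q ∈ Q, w q * q u = 1) :
    ∀ q ∈ Q, w q ≠ 0 → q u = 1 := by
  have key : ∑ q ∈ Q, w q * (1 - q u) = 0 := by
    simp only [mul_sub, Finset.sum_sub_distrib, mul_one, hw1, hsum, sub_self]
  have h0 := (Finset.sum_eq_zero_iff_of_nonneg (fun q hq =>
    mul_nonneg (hw0 q hq) (by linarith [(hcube q hq u).2]))).mp key
  intro q hq hwq
  have := h0 q hq
  rcases mul_eq_zero.mp this with h | h
  · exact absurd h hwq
  · linarith

/-- A 0/1-vertex of the cube lying in the hull of a subset of the cube is in the set. -/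
lemma vertex_mem {Q : Finset (ι → ℝ)} {p : ι → ℝ}
    (hcube : ∀ q ∈ Q, ∀ v, q v ∈ Set.Icc (0:ℝ) 1)
    (hp01 : ∀ u, p u = 0 ∨ p u = 1)
    (h : p ∈ convexHull ℝ (Q : Set (ι → ℝ))) : p ∈ Q := by
  obtain ⟨w, hw0, hw1, hws⟩ := exists_weights h
  have hex : ∃ q ∈ Q, w q ≠ 0 := by
    by_contra hc
    push_neg at hc
    rw [Finset.sum_eq_zero (fun q hq => hc q hq)] at hw1
    norm_num at hw1
  obtain ⟨q, hq, hwq⟩ := hex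
  have : q = p := by
    funext u
    rcases hp01 u with h0 | h1
    · rw [supp_coord_zero hw0 hcube (by rw [hws u, h0]) q hq hwq, h0]
    · rw [supp_coord_one hw0 hw1 hcube (by rw [hws u, h1]) q hq hwq, h1]
  exact this ▸ hq

end weights

-- the 0/1 vertex points
def vtx (N Mn : ℕ) (lit : Fin Mn → Fin 3 → Fin N × Bool) :
    (Fin N × Bool) ⊕ (Fin Mn × Fin 3) → (SatCoord N Mn → ℝ)
  | .inl (i, b) => satE (Sum.inl (0, i)) + litVec (i, b)
  | .inr (j, k) => satE (Sum.inr j) + litVec (lit j k)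

section vtx
variable {N Mn : ℕ} {lit : Fin Mn → Fin 3 → Fin N × Bool}

@[simp] lemma vtx_inl_X (i i' : Fin N) (b : Bool) :
    vtx N Mn lit (.inl (i, b)) (Sum.inl (0, i')) = if i' = i then 1 else 0 := by
  simp [vtx, litVec_X, Prod.ext_iff]

@[simp] lemma vtx_inl_Y (i i' : Fin N) (b : Bool) :
    vtx N Mn lit (.inl (i, b)) (Sum.inl (1, i')) = if i = i' then 1 else 0 := by
  simp [vtx, litVec_Y, Prod.ext_iff]

@[simp] lemma vtx_inl_Z (i i' : Fin N) (b : Bool) :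
    vtx N Mn lit (.inl (i, b)) (Sum.inl (2, i')) = if i = i' ∧ b = true then 1 else 0 := by
  simp [vtx, litVec_Z, Prod.ext_iff]

@[simp] lemma vtx_inl_C (i : Fin N) (b : Bool) (j' : Fin Mn) :
    vtx N Mn lit (.inl (i, b)) (Sum.inr j') = 0 := by
  simp [vtx, litVec_C]

@[simp] lemma vtx_inr_X (j : Fin Mn) (k : Fin 3) (i' : Fin N) :
    vtx N Mn lit (.inr (j, k)) (Sum.inl (0, i')) = 0 := by
  simp [vtx, litVec_X]

@[simp] lemma vtx_inr_Y (j : Fin Mn) (k : Fin 3) (i' : Fin N) :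
    vtx N Mn lit (.inr (j, k)) (Sum.inl (1, i')) = if (lit j k).1 = i' then 1 else 0 := by
  simp [vtx, litVec_Y]

@[simp] lemma vtx_inr_Z (j : Fin Mn) (k : Fin 3) (i' : Fin N) :
    vtx N Mn lit (.inr (j, k)) (Sum.inl (2, i')) =
      if (lit j k).1 = i' ∧ (lit j k).2 = true then 1 else 0 := by
  simp [vtx, litVec_Z]

@[simp] lemma vtx_inr_C (j j' : Fin Mn) (k : Fin 3) :
    vtx N Mn lit (.inr (j, k)) (Sum.inr j') = if j' = j then 1 else 0 := by
  simp [vtx, litVec_C]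

lemma vtx_01 (s : (Fin N × Bool) ⊕ (Fin Mn × Fin 3)) (u : SatCoord N Mn) :
    vtx N Mn lit s u = 0 ∨ vtx N Mn lit s u = 1 := by
  have bool01 : ∀ (a : Prop) [Decidable a] (b : Bool),
      (a → b = false) ∨ (a ∧ b = true) := by
    intro a _ b
    cases b
    · exact Or.inl fun _ => rfl
    · by_cases h : a
      · exact Or.inr ⟨h, rfl⟩
      · exact Or.inl fun ha => absurd ha h
  obtain ⟨t, i'⟩ | j' := u
  · fin_cases t <;> obtain ⟨i, b⟩ | ⟨j, k⟩ := s <;> simp <;>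
      first | tauto | exact bool01 _ _
  · obtain ⟨i, b⟩ | ⟨j, k⟩ := s <;> simp <;> tauto

lemma vtx_inj (hvar : ∀ j, ∀ k₁ k₂ : Fin 3, k₁ ≠ k₂ → (lit j k₁).1 ≠ (lit j k₂).1) :
    Function.Injective (vtx N Mn lit) := by
  rintro (⟨i, b⟩ | ⟨j, k⟩) (⟨i', b'⟩ | ⟨j', k'⟩) h
  · have h1 := congrFun h (Sum.inl (0, i))
    have h2 := congrFun h (Sum.inl (2, i))
    simp at h1 h2
    by_cases hii : i = i'
    · subst hii
      cases b <;> cases b' <;> simp_all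
    · exact absurd h1 hii
  · have h1 := congrFun h (Sum.inl (0, i))
    simp at h1
  · have h1 := congrFun h (Sum.inl (0, i'))
    simp at h1
  · have h1 := congrFun h (Sum.inr j)
    simp at h1
    by_cases hjj : j = j'
    · subst hjj
      by_cases hkk : k = k'
      · rw [hkk]
      · exfalso
        have h2 := congrFun h (Sum.inl (1, (lit j k).1))
        simp at h2
        by_cases hv : (lit j k').1 = (lit j k).1
        · exact hvar j k' k (fun e => hkk e.symm) hv
        · exact hv h2
    · exact absurd h1 hjj
end vtx

section main
variable {N Mn : ℕ} {lit : Fin Mn → Fin 3 → Fin N × Bool}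

lemma litVec_01 (l : Fin N × Bool) (u : SatCoord N Mn) :
    litVec l u = 0 ∨ litVec l u = 1 := by
  rcases l with ⟨a, b⟩
  obtain ⟨t, i'⟩ | j' := u
  · cases b
    · simp [litVec, Prod.ext_iff]; tauto
    · simp only [litVec, Pi.add_apply, satE_apply, Sum.inl.injEq, Prod.mk.injEq,
        if_true, Prod.snd]
      split_ifs <;> simp_all
  · cases b <;> simp [litVec]

lemma vtx_inl_def (i : Fin N) (b : Bool) :
    vtx N Mn lit (.inl (i, b)) = satE (Sum.inl (0, i)) + litVec (i, b) := rfl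

lemma vtx_inr_def (j : Fin Mn) (k : Fin 3) :
    vtx N Mn lit (.inr (j, k)) = satE (Sum.inr j) + litVec (lit j k) := rfl

lemma mem01 {x : ℝ} (h : x = 0 ∨ x = 1) : x ∈ Set.Icc (0:ℝ) 1 := by
  rcases h with h | h <;> simp [h]

lemma forward (σ : Fin N → Bool) (hσ : ∀ j, ∃ k, σ (lit j k).1 = (lit j k).2) :
    ∃ Q : Finset (SatCoord N Mn → ℝ),
      Q.card ≤ 3 * N + 3 * Mn ∧
      (∀ q ∈ Q, ∀ u, q u ∈ Set.Icc (0 : ℝ) 1) ∧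
      satP N Mn lit ⊆ convexHull ℝ (Q : Set (SatCoord N Mn → ℝ)) := by
  classical
  set Q : Finset (SatCoord N Mn → ℝ) :=
    (Finset.univ.image fun s : (Fin N × Bool) ⊕ (Fin Mn × Fin 3) => vtx N Mn lit s) ∪
    (Finset.univ.image fun i : Fin N => litVec (N := N) (Mn := Mn) (i, σ i)) with hQ
  have hvtx_mem : ∀ s, vtx N Mn lit s ∈ Q := fun s =>
    Finset.mem_union_left _ (Finset.mem_image.mpr ⟨s, Finset.mem_univ _, rfl⟩)
  have hlit_mem : ∀ i, litVec (N := N) (Mn := Mn) (i, σ i) ∈ Q := fun i =>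
    Finset.mem_union_right _ (Finset.mem_image.mpr ⟨i, Finset.mem_univ _, rfl⟩)
  refine ⟨Q, ?_, ?_, ?_⟩
  · calc Q.card ≤ _ + _ := Finset.card_union_le _ _
      _ ≤ (2 * N + 3 * Mn) + N := by
          gcongr <;> apply le_trans (Finset.card_image_le) <;>
            simp [Finset.card_univ] <;> ring_nf <;> omega
      _ ≤ 3 * N + 3 * Mn := by omega
  · intro q hq u
    rcases Finset.mem_union.mp hq with h | h
    · obtain ⟨s, _, rfl⟩ := Finset.mem_image.mp h
      exact mem01 (vtx_01 s u)
    · obtain ⟨i, _, rfl⟩ := Finset.mem_image.mp h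
      exact mem01 (litVec_01 _ u)
  · intro p hp
    have hcvx := convex_convexHull ℝ (Q : Set (SatCoord N Mn → ℝ))
    have hsub := subset_convexHull ℝ (Q : Set (SatCoord N Mn → ℝ))
    simp only [satP, Set.mem_union] at hp
    rcases hp with ((hp | hp) | hp) | hp
    · obtain ⟨i, hi⟩ := Set.mem_iUnion.mp hp
      rcases hi with hi | hi <;> rw [hi] <;>
        exact hsub (hvtx_mem (.inl (i, _)))
    · simp only [Set.mem_iUnion] at hp
      obtain ⟨j, k, hjk⟩ := hp
      rw [hjk]
      exact hsub (hvtx_mem (.inr (j, k)))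
    · obtain ⟨i, hi⟩ := hp
      have hx := hsub (hvtx_mem (.inl (i, !σ i)))
      have hy := hsub (hlit_mem i)
      have key := hcvx hx hy (by norm_num : (0:ℝ) ≤ 1/2) (by norm_num : (0:ℝ) ≤ 1/2)
        (by norm_num)
      have hpe : p = (1/2 : ℝ) • vtx N Mn lit (.inl (i, !σ i)) +
          (1/2 : ℝ) • litVec (i, σ i) := by
        rw [← hi, vtx_inl_def]
        cases hσi : σ i <;> funext u <;>
          simp [litVec, Pi.add_apply, satE_apply, smul_eq_mul, hσi] <;>
          split_ifs <;> ring
      rw [hpe]; exact key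
    · obtain ⟨j, hj⟩ := hp
      obtain ⟨k, hk⟩ := hσ j
      have hx1 : ∀ k' : Fin 3, vtx N Mn lit (.inr (j, k')) ∈
          convexHull ℝ (Q : Set (SatCoord N Mn → ℝ)) := fun k' => hsub (hvtx_mem _)
      have hy : litVec (N := N) (Mn := Mn) (lit j k) ∈
          convexHull ℝ (Q : Set (SatCoord N Mn → ℝ)) := by
        have : litVec (N := N) (Mn := Mn) (lit j k) =
            litVec ((lit j k).1, σ (lit j k).1) := by
          rw [hk]
        rw [this]; exact hsub (hlit_mem _)
      have step : ∀ k0 k1 k2 : Fin 3,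
          litVec (lit j k0) ∈ convexHull ℝ (Q : Set (SatCoord N Mn → ℝ)) →
          (litVec (lit j k0) + litVec (lit j k1) + litVec (lit j k2)
              : SatCoord N Mn → ℝ) =
            litVec (lit j 0) + litVec (lit j 1) + litVec (lit j 2) →
          p ∈ convexHull ℝ (Q : Set (SatCoord N Mn → ℝ)) := by
        intro k0 k1 k2 h0 hperm
        have hm := hcvx (hx1 k1) (hx1 k2) (by norm_num : (0:ℝ) ≤ 1/2)
          (by norm_num : (0:ℝ) ≤ 1/2) (by norm_num)
        have key := hcvx hm h0 (by norm_num : (0:ℝ) ≤ 2/3)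
          (by norm_num : (0:ℝ) ≤ 1/3) (by norm_num)
        have hpe : p = (2/3 : ℝ) • ((1/2 : ℝ) • vtx N Mn lit (.inr (j, k1)) +
            (1/2 : ℝ) • vtx N Mn lit (.inr (j, k2))) + (1/3 : ℝ) • litVec (lit j k0) := by
          rw [← hj]
          beta_reduce
          rw [← hperm, vtx_inr_def, vtx_inr_def]
          funext u
          simp only [Pi.add_apply, Pi.smul_apply, smul_eq_mul, Pi.mul_apply]
          ring
        rw [hpe]; exact key
      fin_cases k
      · exact step 0 1 2 hy (by ring)
      · exact step 1 0 2 hy (by ring)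
      · exact step 2 0 1 hy (by ring)

-- the fractional points
def pxPt (N Mn : ℕ) (i : Fin N) : SatCoord N Mn → ℝ :=
  (1 / 2 : ℝ) • satE (Sum.inl (0, i)) + satE (Sum.inl (1, i)) +
    (1 / 2 : ℝ) • satE (Sum.inl (2, i))

def pcPt (N Mn : ℕ) (lit : Fin Mn → Fin 3 → Fin N × Bool) (j : Fin Mn) : SatCoord N Mn → ℝ :=
  (2 / 3 : ℝ) • satE (Sum.inr j) +
    (1 / 3 : ℝ) • (litVec (lit j 0) + litVec (lit j 1) + litVec (lit j 2))

@[simp] lemma pxPt_X (i i' : Fin N) :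
    pxPt N Mn i (Sum.inl (0, i')) = if i' = i then 1/2 else 0 := by
  simp [pxPt, satE_apply, Prod.ext_iff]

@[simp] lemma pxPt_Y (i i' : Fin N) :
    pxPt N Mn i (Sum.inl (1, i')) = if i' = i then 1 else 0 := by
  simp [pxPt, satE_apply, Prod.ext_iff]

@[simp] lemma pxPt_Z (i i' : Fin N) :
    pxPt N Mn i (Sum.inl (2, i')) = if i' = i then 1/2 else 0 := by
  simp [pxPt, satE_apply, Prod.ext_iff]

@[simp] lemma pxPt_C (i : Fin N) (j : Fin Mn) :
    pxPt N Mn i (Sum.inr j) = 0 := by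
  simp [pxPt, satE_apply]

@[simp] lemma pcPt_C (j j' : Fin Mn) :
    pcPt N Mn lit j (Sum.inr j') = if j' = j then 2/3 else 0 := by
  simp [pcPt, satE_apply, litVec_C]

@[simp] lemma pcPt_X (j : Fin Mn) (i : Fin N) :
    pcPt N Mn lit j (Sum.inl (0, i)) = 0 := by
  simp [pcPt, satE_apply, litVec_X]

lemma pcPt_Y (j : Fin Mn) (i : Fin N) :
    pcPt N Mn lit j (Sum.inl (1, i)) =
      1/3 * ((if (lit j 0).1 = i then 1 else 0) + (if (lit j 1).1 = i then 1 else 0) +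
        (if (lit j 2).1 = i then 1 else 0)) := by
  simp [pcPt, satE_apply, litVec_Y]
  split_ifs <;> ring

lemma pcPt_Z (j : Fin Mn) (i : Fin N) :
    pcPt N Mn lit j (Sum.inl (2, i)) =
      1/3 * ((if (lit j 0).1 = i ∧ (lit j 0).2 = true then 1 else 0) +
        (if (lit j 1).1 = i ∧ (lit j 1).2 = true then 1 else 0) +
        (if (lit j 2).1 = i ∧ (lit j 2).2 = true then 1 else 0)) := by
  simp [pcPt, satE_apply, litVec_Z]
  split_ifs <;> ring

lemma vtx_Z_le_Y (s : (Fin N × Bool) ⊕ (Fin Mn × Fin 3)) (i : Fin N) :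
    vtx N Mn lit s (Sum.inl (2, i)) ≤ vtx N Mn lit s (Sum.inl (1, i)) := by
  obtain ⟨i', b⟩ | ⟨j, k⟩ := s <;> simp <;> split_ifs <;> simp_all

lemma backward (hvar : ∀ j, ∀ k₁ k₂ : Fin 3, k₁ ≠ k₂ → (lit j k₁).1 ≠ (lit j k₂).1)
    (Q : Finset (SatCoord N Mn → ℝ)) (hcard : Q.card ≤ 3 * N + 3 * Mn)
    (hcube : ∀ q ∈ Q, ∀ u, q u ∈ Set.Icc (0 : ℝ) 1)
    (hconv : satP N Mn lit ⊆ convexHull ℝ (Q : Set (SatCoord N Mn → ℝ))) :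
    ∃ σ : Fin N → Bool, ∀ j, ∃ k, σ (lit j k).1 = (lit j k).2 := by
  classical
  -- all vertex points belong to Q
  have hPvtx : ∀ s, vtx N Mn lit s ∈ convexHull ℝ (Q : Set (SatCoord N Mn → ℝ)) := by
    intro s
    apply hconv
    rcases s with ⟨i, b⟩ | ⟨j, k⟩
    · refine Or.inl (Or.inl (Or.inl (Set.mem_iUnion.mpr ⟨i, ?_⟩)))
      cases b
      · exact Or.inl rfl
      · exact Or.inr rfl
    · refine Or.inl (Or.inl (Or.inr ?_))
      simp only [Set.mem_iUnion]
      exact ⟨j, k, rfl⟩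
  have hvtxQ : ∀ s, vtx N Mn lit s ∈ Q :=
    fun s => vertex_mem hcube (vtx_01 s) (hPvtx s)
  have hpx : ∀ i, pxPt N Mn i ∈ convexHull ℝ (Q : Set (SatCoord N Mn → ℝ)) :=
    fun i => hconv (Or.inl (Or.inr ⟨i, rfl⟩))
  have hpc : ∀ j, pcPt N Mn lit j ∈ convexHull ℝ (Q : Set (SatCoord N Mn → ℝ)) :=
    fun j => hconv (Or.inr ⟨j, rfl⟩)
  -- the vertex set and the remainder
  set V01 : Finset (SatCoord N Mn → ℝ) := Finset.univ.image (vtx N Mn lit) with hV01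
  have hV01card : V01.card = 2 * N + 3 * Mn := by
    rw [hV01, Finset.card_image_of_injective _ (vtx_inj hvar)]
    simp [Finset.card_univ]
    ring
  have hV01sub : V01 ⊆ Q := by
    intro q hq
    obtain ⟨s, _, rfl⟩ := Finset.mem_image.mp hq
    exact hvtxQ s
  set R : Finset (SatCoord N Mn → ℝ) := Q \ V01 with hRdef
  have hRcard : R.card ≤ N := by
    rw [hRdef, Finset.card_sdiff_of_subset hV01sub]
    have := Finset.card_le_card hV01sub
    omega
  -- choose the fractional point r i for each variable
  have hRex : ∀ i : Fin N, ∃ rr, rr ∈ R ∧ rr (Sum.inl (1, i)) = 1 ∧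
      (∀ i', i' ≠ i → rr (Sum.inl (1, i')) = 0) ∧
      (∀ j : Fin Mn, rr (Sum.inr j) = 0) ∧
      (∀ i', i' ≠ i → rr (Sum.inl (0, i')) = 0) ∧
      (∀ i', i' ≠ i → rr (Sum.inl (2, i')) = 0) := by
    intro i
    obtain ⟨w, hw0, hw1, hws⟩ := exists_weights (hpx i)
    have hsY : ∀ q ∈ Q, w q ≠ 0 → q (Sum.inl (1, i)) = 1 :=
      supp_coord_one hw0 hw1 hcube (by rw [hws]; simp)
    have hz : ∀ u, pxPt N Mn i u = 0 → ∀ q ∈ Q, w q ≠ 0 → q u = 0 :=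
      fun u hu => supp_coord_zero hw0 hcube (by rw [hws, hu])
    have hexr : ∃ q ∈ Q, w q ≠ 0 ∧ q (Sum.inl (0, i)) ≠ 1 := by
      by_contra hcon
      push_neg at hcon
      have hh : ∑ q ∈ Q, w q * q (Sum.inl (0, i)) = 1 := by
        rw [← hw1]
        refine Finset.sum_congr rfl fun q hq => ?_
        by_cases hwq : w q = 0
        · simp [hwq]
        · rw [hcon q hq hwq, mul_one]
      rw [hws] at hh
      simp at hh
    obtain ⟨q, hqQ, hwq, hq1⟩ := hexr
    refine ⟨q, ?_, hsY q hqQ hwq, fun i' hi' => hz _ (by simp [hi']) q hqQ hwq,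
      fun j => hz _ (by simp) q hqQ hwq, fun i' hi' => hz _ (by simp [hi']) q hqQ hwq,
      fun i' hi' => hz _ (by simp [hi']) q hqQ hwq⟩
    rw [hRdef, Finset.mem_sdiff]
    refine ⟨hqQ, fun hmem => ?_⟩
    obtain ⟨s, _, hs⟩ := Finset.mem_image.mp hmem
    rcases s with ⟨i', b⟩ | ⟨j, k⟩
    · by_cases hii : i' = i
      · subst hii; apply hq1; rw [← hs]; simp
      · have hc := hz (Sum.inl (0, i')) (by simp [hii]) q hqQ hwq
        rw [← hs] at hc; simp at hc
    · have hc := hz (Sum.inr j) (by simp) q hqQ hwq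
      rw [← hs] at hc; simp at hc
  choose r hrR hrY1 hrY0 hrC hrX0 hrZ0 using hRex
  have hrinj : Function.Injective r := by
    intro i i' h
    by_contra hne
    have h1 := hrY1 i
    rw [h] at h1
    rw [hrY0 i' i hne] at h1
    norm_num at h1
  have hReq : R = Finset.univ.image r := by
    refine (Finset.eq_of_subset_of_card_le ?_ ?_).symm
    · intro q hq
      obtain ⟨i, _, rfl⟩ := Finset.mem_image.mp hq
      exact hrR i
    · rw [Finset.card_image_of_injective _ hrinj, Finset.card_univ, Fintype.card_fin]
      exact hRcard
  -- the assignment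
  refine ⟨fun i => decide (r i (Sum.inl (2, i)) = 1), fun j => ?_⟩
  obtain ⟨v, hv0, hv1, hvs⟩ := exists_weights (hpc j)
  have hz : ∀ u, pcPt N Mn lit j u = 0 → ∀ q ∈ Q, v q ≠ 0 → q u = 0 :=
    fun u hu => supp_coord_zero hv0 hcube (by rw [hvs, hu])
  have hexr : ∃ q ∈ Q, v q ≠ 0 ∧ q (Sum.inr j) ≠ 1 := by
    by_contra hcon
    push_neg at hcon
    have hh : ∑ q ∈ Q, v q * q (Sum.inr j) = 1 := by
      rw [← hv1]
      refine Finset.sum_congr rfl fun q hq => ?_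
      by_cases hvq : v q = 0
      · simp [hvq]
      · rw [hcon q hq hvq, mul_one]
    rw [hvs] at hh
    simp at hh
    norm_num at hh
  obtain ⟨q, hqQ, hvq, hq1⟩ := hexr
  have hqX : ∀ i, q (Sum.inl (0, i)) = 0 := fun i => hz _ (by simp) q hqQ hvq
  have hqR : q ∈ R := by
    rw [hRdef, Finset.mem_sdiff]
    refine ⟨hqQ, fun hmem => ?_⟩
    obtain ⟨s, _, hs⟩ := Finset.mem_image.mp hmem
    rcases s with ⟨i', b⟩ | ⟨j', k'⟩
    · have hc := hqX i'; rw [← hs] at hc; simp at hc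
    · by_cases hjj : j' = j
      · subst hjj; apply hq1; rw [← hs]; simp
      · have hc := hz (Sum.inr j') (by simp [hjj]) q hqQ hvq
        rw [← hs] at hc; simp at hc
  rw [hReq] at hqR
  obtain ⟨i₀, _, hri⟩ := Finset.mem_image.mp hqR
  have hex_k : ∃ k, (lit j k).1 = i₀ := by
    by_contra hcon
    push_neg at hcon
    have hy0 : pcPt N Mn lit j (Sum.inl (1, i₀)) = 0 := by
      rw [pcPt_Y]; simp [hcon 0, hcon 1, hcon 2]
    have hc := hz _ hy0 q hqQ hvq
    rw [← hri, hrY1 i₀] at hc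
    norm_num at hc
  obtain ⟨k, hk⟩ := hex_k
  refine ⟨k, ?_⟩
  show decide (r (lit j k).1 (Sum.inl (2, (lit j k).1)) = 1) = (lit j k).2
  rw [hk]
  cases hb : (lit j k).2 with
  | false =>
    have hz0 : pcPt N Mn lit j (Sum.inl (2, i₀)) = 0 := by
      rw [pcPt_Z]
      have h0 : ∀ k' : Fin 3, ¬((lit j k').1 = i₀ ∧ (lit j k').2 = true) := by
        rintro k' ⟨h1, h2⟩
        by_cases hkk : k' = k
        · subst hkk; rw [hb] at h2; simp at h2
        · exact hvar j k' k hkk (h1.trans hk.symm)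
      simp [h0 0, h0 1, h0 2]
    have hc := hz _ hz0 q hqQ hvq
    rw [← hri] at hc
    simp [hc]
  | true =>
    have hYZ : ∑ q' ∈ Q, v q' * (q' (Sum.inl (1, i₀)) - q' (Sum.inl (2, i₀))) = 0 := by
      have e1 := hvs (Sum.inl (1, i₀))
      have e2 := hvs (Sum.inl (2, i₀))
      have hsp : ∑ q' ∈ Q, v q' * (q' (Sum.inl (1, i₀)) - q' (Sum.inl (2, i₀))) =
          (∑ q' ∈ Q, v q' * q' (Sum.inl (1, i₀))) -
          ∑ q' ∈ Q, v q' * q' (Sum.inl (2, i₀)) := by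
        rw [← Finset.sum_sub_distrib]
        exact Finset.sum_congr rfl fun q' _ => by ring
      rw [hsp, e1, e2, pcPt_Y, pcPt_Z]
      have hcomp : ∀ k' : Fin 3, (if (lit j k').1 = i₀ then (1:ℝ) else 0) =
          if (lit j k').1 = i₀ ∧ (lit j k').2 = true then 1 else 0 := by
        intro k'
        by_cases hkk : k' = k
        · subst hkk; simp [hk, hb]
        · have hne : (lit j k').1 ≠ i₀ := fun h => hvar j k' k hkk (h.trans hk.symm)
          simp [hne]
      rw [hcomp 0, hcomp 1, hcomp 2]
      ring
    have hterm : ∀ q' ∈ Q, 0 ≤ v q' * (q' (Sum.inl (1, i₀)) - q' (Sum.inl (2, i₀))) := by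
      intro q' hq'
      by_cases hvq' : v q' = 0
      · simp [hvq']
      apply mul_nonneg (hv0 q' hq')
      by_cases hmem : q' ∈ V01
      · obtain ⟨s, _, rfl⟩ := Finset.mem_image.mp hmem
        linarith [vtx_Z_le_Y (lit := lit) s i₀]
      · have hq'R : q' ∈ R := by rw [hRdef]; exact Finset.mem_sdiff.mpr ⟨hq', hmem⟩
        rw [hReq] at hq'R
        obtain ⟨i', _, rfl⟩ := Finset.mem_image.mp hq'R
        by_cases hii : i' = i₀
        · subst hii
          rw [hrY1 i']
          linarith [(hcube _ hq' (Sum.inl (2, i'))).2]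
        · rw [hrY0 i' i₀ (fun e => hii e.symm), hrZ0 i' i₀ (fun e => hii e.symm)]
          norm_num
    have hall := (Finset.sum_eq_zero_iff_of_nonneg hterm).mp hYZ
    have hq0 := hall q hqQ
    rcases mul_eq_zero.mp hq0 with h | h
    · exact absurd h hvq
    · have h1 : q (Sum.inl (1, i₀)) = 1 := by rw [← hri, hrY1]
      have h2 : q (Sum.inl (2, i₀)) = 1 := by
        have := sub_eq_zero.mp h
        linarith
      rw [← hri] at h2
      simp [h2]

end main

/-- the 3CNF formula `φ` (clauses `lit j = (l_{j,1}, l_{j,2}, l_{j,3})`,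
no repeated clause, no variable twice in a clause) is satisfiable iff there is a
set `Q ⊆ [0,1]^D` with `|Q| ≤ 3N + 3M` and `P ⊆ conv(Q)`. -/
theorem threeSat_iff_hypercube (N Mn : ℕ) (lit : Fin Mn → Fin 3 → Fin N × Bool)
    (hcl : Function.Injective
      (fun j => ({lit j 0, lit j 1, lit j 2} : Finset (Fin N × Bool))))
    (hvar : ∀ j, ∀ k₁ k₂ : Fin 3, k₁ ≠ k₂ → (lit j k₁).1 ≠ (lit j k₂).1) :
    (∃ σ : Fin N → Bool, ∀ j, ∃ k, σ (lit j k).1 = (lit j k).2) ↔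
    (∃ Q : Finset (SatCoord N Mn → ℝ),
      Q.card ≤ 3 * N + 3 * Mn ∧
      (∀ q ∈ Q, ∀ u, q u ∈ Set.Icc (0 : ℝ) 1) ∧
      satP N Mn lit ⊆ convexHull ℝ (Q : Set (SatCoord N Mn → ℝ))) := by
  constructor
  · rintro ⟨σ, hσ⟩
    exact forward σ hσ
  · rintro ⟨Q, h1, h2, h3⟩
    exact backward hvar Q h1 h2 h3
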